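/- arXiv:1002.2048 — 2 statements merged into one kernel-verified Lean document; each statement's English description precedes it below -/
import Mathlib

section
/- Let I be a negative definite symmetric integer matrix indexed by a finite set V. Then for each v in V there exists a unique vector E_v^* with rational entries such that I · E_v^* = -e_v (the negative of the v-th standard basis vector), and all entries of E_v^* are nonnegative... moreover if the graph with vertex set V and edges given by positive off-diagonal entries of I is connected, all entries of E_v^* are strictly positive. -/
open Matrix

/-- For a negative definite symmetric integer matrix `I` with nonnegative
off-diagonal entries, for each `v` there is a unique rational vector `x` with
`I x = -e_v`; it is nonnegative, and strictly positive if the associated graph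
(edges = positive off-diagonal entries) is connected. -/
theorem stmt_0 {V : Type*} [Fintype V] [DecidableEq V]
    (I : Matrix V V ℤ) (hsymm : I.IsSymm)
    (hneg : ((-I).map ((↑) : ℤ → ℚ)).PosDef)
    (hoff : ∀ v w : V, v ≠ w → 0 ≤ I v w) :
    ∀ v : V, ∃ x : V → ℚ,
      (I.map ((↑) : ℤ → ℚ)) *ᵥ x = -Pi.single v 1 ∧
      (∀ w, 0 ≤ x w) ∧
      (∀ y : V → ℚ, (I.map ((↑) : ℤ → ℚ)) *ᵥ y = -Pi.single v 1 → y = x) ∧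
      ((∀ a b : V, a ≠ b →
          Relation.ReflTransGen (fun c d => c ≠ d ∧ 0 < I c d) a b) →
        ∀ w, 0 < x w) := by
  classical
  set A : Matrix V V ℚ := I.map ((↑) : ℤ → ℚ) with hA
  have hmapneg : (-I).map ((↑) : ℤ → ℚ) = -A := by
    ext i j; simp [hA]
  rw [hmapneg] at hneg
  -- the quadratic form of `-A` is positive definite
  have hQ : ∀ z : V → ℚ, z ≠ 0 → 0 < z ⬝ᵥ ((-A) *ᵥ z) := by
    intro z hz
    have := hneg.dotProduct_mulVec_pos hz
    simpa using this
  -- `A *ᵥ ·` is injective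
  have hinj : Function.Injective fun z : V → ℚ => A *ᵥ z := by
    intro y z hyz
    have hyz' : A *ᵥ y = A *ᵥ z := hyz
    by_contra hne
    have hz : y - z ≠ 0 := sub_ne_zero.2 hne
    have h0 : A *ᵥ (y - z) = 0 := by
      rw [Matrix.mulVec_sub, hyz', sub_self]
    have := hQ (y - z) hz
    rw [Matrix.neg_mulVec, h0] at this
    simp at this
  -- hence surjective
  have hsurj : Function.Surjective fun z : V → ℚ => A *ᵥ z := by
    have : Function.Injective A.mulVecLin := by
      intro y z h
      exact hinj (by simpa [Matrix.mulVecLin_apply] using h)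
    have := LinearMap.injective_iff_surjective.mp this
    intro b
    obtain ⟨z, hz⟩ := this b
    exact ⟨z, by simpa [Matrix.mulVecLin_apply] using hz⟩
  intro v
  obtain ⟨x, hx⟩ := hsurj (-Pi.single v 1)
  simp only at hx
  -- `(-A) *ᵥ x = e_v`
  have hBx : (-A) *ᵥ x = Pi.single v 1 := by
    rw [Matrix.neg_mulVec, hx, neg_neg]
  -- nonnegativity of entries of A off the diagonal... rather: cast of hoff
  have hoffQ : ∀ a b : V, a ≠ b → 0 ≤ A a b := by
    intro a b hab
    simp only [hA, Matrix.map_apply]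
    exact_mod_cast hoff a b hab
  -- nonnegativity of x
  have hnn : ∀ w, 0 ≤ x w := by
    by_contra hc
    push_neg at hc
    obtain ⟨w₀, hw₀⟩ := hc
    set u : V → ℚ := fun w => max (-x w) 0 with hu
    set p : V → ℚ := fun w => max (x w) 0 with hp
    have hxup : p - u = x := by
      funext w
      simpa [hp, hu] using max_zero_sub_max_neg_zero_eq_self (x w)
    have hun : u ≠ 0 := by
      intro h
      have h0 : u w₀ = 0 := congrFun h w₀
      have hpos : 0 < u w₀ := lt_max_iff.2 (Or.inl (by linarith))
      rw [h0] at hpos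
      exact lt_irrefl _ hpos
    have hunn : ∀ w, 0 ≤ u w := fun w => le_max_right _ _
    have hpnn : ∀ w, 0 ≤ p w := fun w => le_max_right _ _
    -- `u ⬝ᵥ (-A) *ᵥ p ≤ 0`
    have h1 : u ⬝ᵥ ((-A) *ᵥ p) ≤ 0 := by
      apply Finset.sum_nonpos
      intro w _
      rcases eq_or_lt_of_le (hunn w) with h | h
      · rw [← h, zero_mul]
      · have hxw : x w < 0 := by
          by_contra hxw
          push_neg at hxw
          have : u w = 0 := by simp [hu, max_eq_right, neg_nonpos_of_nonneg hxw]
          rw [this] at h; exact lt_irrefl _ h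
        have hpw : p w = 0 := max_eq_right hxw.le
        have hinner : ((-A) *ᵥ p) w ≤ 0 := by
          apply Finset.sum_nonpos
          intro j _
          by_cases hj : j = w
          · subst hj; simp [hpw]
          · have h1 : (-A) w j ≤ 0 := by
              simp only [Matrix.neg_apply, neg_nonpos]
              exact hoffQ w j (Ne.symm hj)
            exact mul_nonpos_of_nonpos_of_nonneg h1 (hpnn j)
        exact mul_nonpos_of_nonneg_of_nonpos h.le hinner
    -- `u ⬝ᵥ (-A) *ᵥ x = u v ≥ 0`
    have h2 : 0 ≤ u ⬝ᵥ ((-A) *ᵥ x) := by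
      rw [hBx]
      rw [dotProduct_single]
      simpa using hunn v
    have h3 : u ⬝ᵥ ((-A) *ᵥ u) ≤ 0 := by
      have hupx : u = p - x := by rw [← hxup]; abel
      have heq : (-A) *ᵥ u = (-A) *ᵥ p - (-A) *ᵥ x := by
        rw [hupx, Matrix.mulVec_sub]
      rw [heq, dotProduct_sub]
      linarith
    exact absurd h3 (not_le.2 (hQ u hun))
  -- x ≠ 0 and x v > 0
  have hxne : x ≠ 0 := by
    intro h
    rw [h, Matrix.mulVec_zero] at hx
    have := congrFun hx v
    simp at this
  have hxv : 0 < x v := by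
    have := hQ x hxne
    rwa [hBx, dotProduct_single, mul_one] at this
  -- zero set is closed under edges
  have hclosed : ∀ a c : V, x a = 0 → a ≠ c → 0 < I a c → x c = 0 := by
    intro a c ha hac hIac
    have hav : a ≠ v := by
      intro h; rw [h] at ha; rw [ha] at hxv; exact lt_irrefl _ hxv
    have hrow : (A *ᵥ x) a = 0 := by
      rw [hx]
      simp [Pi.single_eq_of_ne hav]
    have hterms : ∀ j ∈ Finset.univ, 0 ≤ (fun j => A a j * x j) j := by
      intro j _
      by_cases hj : j = a
      · subst hj; simp [ha]
      · exact mul_nonneg (hoffQ a j (Ne.symm hj)) (hnn j)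
    have hsum : ∑ j, A a j * x j = 0 := hrow
    have := (Finset.sum_eq_zero_iff_of_nonneg hterms).mp hsum c (Finset.mem_univ c)
    have hAac : 0 < A a c := by
      simp only [hA, Matrix.map_apply]
      exact_mod_cast hIac
    exact (mul_eq_zero.mp this).resolve_left hAac.ne'
  have hprop : ∀ {a b : V},
      Relation.ReflTransGen (fun c d => c ≠ d ∧ 0 < I c d) a b → x a = 0 → x b = 0 := by
    intro a b hab ha
    induction hab with
    | refl => exact ha
    | tail _ hbc ih => exact hclosed _ _ ih hbc.1 hbc.2
  refine ⟨x, hx, hnn, ?_, ?_⟩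
  · intro y hy
    exact hinj (hy.trans hx.symm)
  · intro hconn w
    rcases eq_or_lt_of_le (hnn w) with h | h
    · exfalso
      have hwv : w ≠ v := by
        intro he; rw [he] at h; rw [← h] at hxv; exact lt_irrefl _ hxv
      have hxv0 : x v = 0 := hprop (hconn w v hwv) h.symm
      rw [hxv0] at hxv; exact lt_irrefl _ hxv
    · exact h
end

section
/- Let D_1 = (a_1, b_1) and D_2 = (a_2, b_2) be two vectors in ℚ_{≥0}^2 with a_1 ≤ a_2 and b_1 ≥ b_2 (so neither dominates the other unless equality). Define the blow-up operation replacing the pair by triples (a_i, a_i + b_i, b_i). Then after finitely many such blow-ups of edges where the simultaneous-minimum condition fails, the resulting family satisfies that on each edge one of the vectors attains the minimum at both endpoints. -/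
/-- A combinatorial state: a graph on a finite set of natural-number vertices with a
family of rational "cycles" (coefficient vectors) indexed by `ι`. -/
structure CycleState (ι : Type) where
  verts : Finset ℕ
  edges : Finset (ℕ × ℕ)
  vec : ι → ℕ → ℚ

/-- Blowing up the edge `(v, w)`: a new vertex `u` is inserted whose coefficient in
each cycle is the sum of the coefficients at `v` and `w`. -/
def CycleState.blowup {ι : Type} (s : CycleState ι) (v w u : ℕ) : CycleState ι where
  verts := insert u s.verts
  edges := (s.edges.erase (v, w)) ∪ {(v, u), (u, w)}
  vec := fun i x => if x = u then s.vec i v + s.vec i w else s.vec i x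

/-- One blow-up step at some edge, using a fresh vertex. -/
def CycleState.Step {ι : Type} (s s' : CycleState ι) : Prop :=
  ∃ v w u : ℕ, (v, w) ∈ s.edges ∧ u ∉ s.verts ∧ v ∈ s.verts ∧ w ∈ s.verts ∧
    s' = s.blowup v w u

/-- On each edge one of the vectors attains the minimum at both endpoints. -/
def CycleState.Good {ι : Type} (s : CycleState ι) : Prop :=
  ∀ p ∈ s.edges, ∃ i : ι,
    (∀ j : ι, s.vec i p.1 ≤ s.vec j p.1) ∧ (∀ j : ι, s.vec i p.2 ≤ s.vec j p.2)

lemma vec_blowup_old {s : CycleState (Fin 2)} {v w u : ℕ} (i : Fin 2) {x : ℕ} (hx : x ≠ u) :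
    (s.blowup v w u).vec i x = s.vec i x := by
  simp [CycleState.blowup, hx]

lemma vec_blowup_new {s : CycleState (Fin 2)} {v w u : ℕ} (i : Fin 2) :
    (s.blowup v w u).vec i u = s.vec i v + s.vec i w := by
  simp [CycleState.blowup]

/-- Key induction: a single "bad" edge `(v, w)` where vector `0` is minimal at `v` and
vector `1` is minimal at `w` can be resolved by finitely many blow-ups, without changing
values at existing vertices, and producing only good new edges. -/
lemma key (q : ℚ) (hq : 0 < q) :
    ∀ n : ℕ, ∀ s : CycleState (Fin 2), ∀ v w : ℕ,
      (v, w) ∈ s.edges → v ∈ s.verts → w ∈ s.verts →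
      s.vec 0 v ≤ s.vec 1 v → s.vec 1 w ≤ s.vec 0 w →
      (∃ k : ℤ, (s.vec 1 v - s.vec 0 v) * q = k) →
      (∃ k : ℤ, (s.vec 0 w - s.vec 1 w) * q = k) →
      ((s.vec 1 v - s.vec 0 v) + (s.vec 0 w - s.vec 1 w)) * q ≤ n →
      ∃ s', Relation.ReflTransGen CycleState.Step s s' ∧
        s.verts ⊆ s'.verts ∧
        (∀ i x, x ∈ s.verts → s'.vec i x = s.vec i x) ∧
        (∀ p ∈ s'.edges, (p ∈ s.edges ∧ p ≠ (v, w)) ∨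
          ∃ i : Fin 2, (∀ j, s'.vec i p.1 ≤ s'.vec j p.1) ∧
            (∀ j, s'.vec i p.2 ≤ s'.vec j p.2)) := by
  intro n
  induction n with
  | zero =>
      intro s v w hvw hv hw hav hbw _ _ hmeas
      push_cast at hmeas
      have hsum : (s.vec 1 v - s.vec 0 v) + (s.vec 0 w - s.vec 1 w) ≤ 0 := by
        by_contra h
        push_neg at h
        nlinarith
      refine ⟨s, Relation.ReflTransGen.refl, le_refl _, fun _ _ _ => rfl, ?_⟩
      intro p hp
      by_cases hpvw : p = (v, w)
      · right
        subst hpvw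
        refine ⟨0, Fin.forall_fin_two.mpr ⟨le_refl _, ?_⟩,
          Fin.forall_fin_two.mpr ⟨le_refl _, ?_⟩⟩
        · show s.vec 0 v ≤ s.vec 1 v
          linarith
        · show s.vec 0 w ≤ s.vec 1 w
          linarith
      · exact Or.inl ⟨hp, hpvw⟩
  | succ n ih =>
      intro s v w hvw hv hw hav hbw hkd hke hmeas
      by_cases hgood : s.vec 1 v ≤ s.vec 0 v ∨ s.vec 0 w ≤ s.vec 1 w
      · -- the edge is already good, no step needed
        refine ⟨s, Relation.ReflTransGen.refl, le_refl _, fun _ _ _ => rfl, ?_⟩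
        intro p hp
        by_cases hpvw : p = (v, w)
        · right
          subst hpvw
          rcases hgood with h | h
          · refine ⟨1, Fin.forall_fin_two.mpr ⟨?_, le_refl _⟩,
              Fin.forall_fin_two.mpr ⟨?_, le_refl _⟩⟩
            · show s.vec 1 v ≤ s.vec 0 v; exact h
            · show s.vec 1 w ≤ s.vec 0 w; exact hbw
          · refine ⟨0, Fin.forall_fin_two.mpr ⟨le_refl _, ?_⟩,
              Fin.forall_fin_two.mpr ⟨le_refl _, ?_⟩⟩
            · show s.vec 0 v ≤ s.vec 1 v; exact hav
            · show s.vec 0 w ≤ s.vec 1 w; exact h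
        · exact Or.inl ⟨hp, hpvw⟩
      push_neg at hgood
      obtain ⟨hdpos, hepos⟩ := hgood
      obtain ⟨kd, hkd⟩ := hkd
      obtain ⟨ke, hke⟩ := hke
      have hkd1 : (1 : ℚ) ≤ (kd : ℚ) := by
        have h0 : (0 : ℚ) < (kd : ℚ) := by
          rw [← hkd]; exact mul_pos (by linarith) hq
        have h1 : (1 : ℤ) ≤ kd := Int.cast_pos.mp h0
        exact_mod_cast h1
      have hke1 : (1 : ℚ) ≤ (ke : ℚ) := by
        have h0 : (0 : ℚ) < (ke : ℚ) := by
          rw [← hke]; exact mul_pos (by linarith) hq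
        have h1 : (1 : ℤ) ≤ ke := Int.cast_pos.mp h0
        exact_mod_cast h1
      -- fresh vertex
      set u : ℕ := s.verts.sup id + 1 with hu_def
      have hu : u ∉ s.verts := by
        intro h
        have := Finset.le_sup (f := id) h
        simp only [id] at this
        omega
      have hvu : v ≠ u := by rintro rfl; exact hu hv
      have hwu : w ≠ u := by rintro rfl; exact hu hw
      set s₁ := s.blowup v w u with hs₁
      have hstep : CycleState.Step s s₁ := ⟨v, w, u, hvw, hu, hv, hw, rfl⟩
      have hverts₁ : s₁.verts = insert u s.verts := rfl
      have hvmem₁ : v ∈ s₁.verts := by rw [hverts₁]; exact Finset.mem_insert_of_mem hv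
      have hwmem₁ : w ∈ s₁.verts := by rw [hverts₁]; exact Finset.mem_insert_of_mem hw
      have humem₁ : u ∈ s₁.verts := by rw [hverts₁]; exact Finset.mem_insert_self u _
      have h1v : ∀ i, s₁.vec i v = s.vec i v := fun i => vec_blowup_old i hvu
      have h1w : ∀ i, s₁.vec i w = s.vec i w := fun i => vec_blowup_old i hwu
      have h1u : ∀ i, s₁.vec i u = s.vec i v + s.vec i w := fun i => vec_blowup_new i
      have hedges₁ : s₁.edges = (s.edges.erase (v, w)) ∪ {(v, u), (u, w)} := rfl
      have hvu_mem : (v, u) ∈ s₁.edges := by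
        rw [hedges₁]; exact Finset.mem_union_right _ (by simp)
      have huw_mem : (u, w) ∈ s₁.edges := by
        rw [hedges₁]; exact Finset.mem_union_right _ (by simp)
      push_cast at hmeas
      rcases le_total (s.vec 0 w - s.vec 1 w) (s.vec 1 v - s.vec 0 v) with hcase | hcase
      · -- e ≤ d : edge (v,u) becomes good, recurse on (u,w)
        have hmeas' : ((s₁.vec 1 u - s₁.vec 0 u) + (s₁.vec 0 w - s₁.vec 1 w)) * q ≤ (n : ℚ) := by
          rw [h1u 0, h1u 1, h1w 0, h1w 1]
          have h1 : ((s.vec 1 v + s.vec 1 w - (s.vec 0 v + s.vec 0 w))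
              + (s.vec 0 w - s.vec 1 w)) * q = (s.vec 1 v - s.vec 0 v) * q := by ring
          have h2 : ((s.vec 1 v - s.vec 0 v) + (s.vec 0 w - s.vec 1 w)) * q
              = (s.vec 1 v - s.vec 0 v) * q + (s.vec 0 w - s.vec 1 w) * q := by ring
          linarith [hke1, hke, hmeas, h1, h2]
        obtain ⟨s', hrel, hsub, hpres, hedg⟩ :=
          ih s₁ u w huw_mem humem₁ hwmem₁
            (by rw [h1u 0, h1u 1]; linarith)
            (by rw [h1w 0, h1w 1]; exact hbw)
            ⟨kd - ke, by rw [h1u 0, h1u 1]; push_cast; rw [← hkd, ← hke]; ring⟩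
            ⟨ke, by rw [h1w 0, h1w 1]; exact hke⟩
            hmeas'
        have hpv : ∀ i, s'.vec i v = s.vec i v := fun i => by
          rw [hpres i v hvmem₁, h1v]
        have hpw : ∀ i, s'.vec i w = s.vec i w := fun i => by
          rw [hpres i w hwmem₁, h1w]
        have hpu : ∀ i, s'.vec i u = s.vec i v + s.vec i w := fun i => by
          rw [hpres i u humem₁, h1u]
        refine ⟨s', Relation.ReflTransGen.head hstep hrel, ?_, ?_, ?_⟩
        · intro x hx
          exact hsub (by rw [hverts₁]; exact Finset.mem_insert_of_mem hx)
        · intro i x hx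
          have hxu : x ≠ u := by rintro rfl; exact hu hx
          rw [hpres i x (by rw [hverts₁]; exact Finset.mem_insert_of_mem hx)]
          exact vec_blowup_old i hxu
        · intro p hp
          rcases hedg p hp with ⟨hpmem, hpne⟩ | hgoodp
          · rw [hedges₁] at hpmem
            rcases Finset.mem_union.mp hpmem with hold | hnew
            · exact Or.inl ⟨Finset.mem_of_mem_erase hold, Finset.ne_of_mem_erase hold⟩
            · simp only [Finset.mem_insert, Finset.mem_singleton] at hnew
              rcases hnew with rfl | rfl
              · -- edge (v, u) is good via i = 0
                right
                refine ⟨0, Fin.forall_fin_two.mpr ⟨le_refl _, ?_⟩,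
                  Fin.forall_fin_two.mpr ⟨le_refl _, ?_⟩⟩
                · show s'.vec 0 v ≤ s'.vec 1 v
                  rw [hpv 0, hpv 1]; exact hav
                · show s'.vec 0 u ≤ s'.vec 1 u
                  rw [hpu 0, hpu 1]; linarith
              · exact absurd rfl hpne
          · exact Or.inr hgoodp
      · -- d ≤ e : edge (u,w) becomes good, recurse on (v,u)
        have hmeas' : ((s₁.vec 1 v - s₁.vec 0 v) + (s₁.vec 0 u - s₁.vec 1 u)) * q ≤ (n : ℚ) := by
          rw [h1u 0, h1u 1, h1v 0, h1v 1]
          have h1 : ((s.vec 1 v - s.vec 0 v)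
              + (s.vec 0 v + s.vec 0 w - (s.vec 1 v + s.vec 1 w))) * q
              = (s.vec 0 w - s.vec 1 w) * q := by ring
          have h2 : ((s.vec 1 v - s.vec 0 v) + (s.vec 0 w - s.vec 1 w)) * q
              = (s.vec 1 v - s.vec 0 v) * q + (s.vec 0 w - s.vec 1 w) * q := by ring
          linarith [hkd1, hkd, hmeas, h1, h2]
        obtain ⟨s', hrel, hsub, hpres, hedg⟩ :=
          ih s₁ v u hvu_mem hvmem₁ humem₁
            (by rw [h1v 0, h1v 1]; exact hav)
            (by rw [h1u 0, h1u 1]; linarith)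
            ⟨kd, by rw [h1v 0, h1v 1]; exact hkd⟩
            ⟨ke - kd, by rw [h1u 0, h1u 1]; push_cast; rw [← hkd, ← hke]; ring⟩
            hmeas'
        have hpv : ∀ i, s'.vec i v = s.vec i v := fun i => by
          rw [hpres i v hvmem₁, h1v]
        have hpw : ∀ i, s'.vec i w = s.vec i w := fun i => by
          rw [hpres i w hwmem₁, h1w]
        have hpu : ∀ i, s'.vec i u = s.vec i v + s.vec i w := fun i => by
          rw [hpres i u humem₁, h1u]
        refine ⟨s', Relation.ReflTransGen.head hstep hrel, ?_, ?_, ?_⟩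
        · intro x hx
          exact hsub (by rw [hverts₁]; exact Finset.mem_insert_of_mem hx)
        · intro i x hx
          have hxu : x ≠ u := by rintro rfl; exact hu hx
          rw [hpres i x (by rw [hverts₁]; exact Finset.mem_insert_of_mem hx)]
          exact vec_blowup_old i hxu
        · intro p hp
          rcases hedg p hp with ⟨hpmem, hpne⟩ | hgoodp
          · rw [hedges₁] at hpmem
            rcases Finset.mem_union.mp hpmem with hold | hnew
            · exact Or.inl ⟨Finset.mem_of_mem_erase hold, Finset.ne_of_mem_erase hold⟩
            · simp only [Finset.mem_insert, Finset.mem_singleton] at hnew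
              rcases hnew with rfl | rfl
              · exact absurd rfl hpne
              · -- edge (u, w) is good via i = 1
                right
                refine ⟨1, Fin.forall_fin_two.mpr ⟨?_, le_refl _⟩,
                  Fin.forall_fin_two.mpr ⟨?_, le_refl _⟩⟩
                · show s'.vec 1 u ≤ s'.vec 0 u
                  rw [hpu 0, hpu 1]; linarith
                · show s'.vec 1 w ≤ s'.vec 0 w
                  rw [hpw 0, hpw 1]; exact hbw
          · exact Or.inr hgoodp

/-- Starting from two vectors `D₁ = (a₁, b₁)`, `D₂ = (a₂, b₂)` in
`ℚ₊²` with `a₁ ≤ a₂` and `b₂ ≤ b₁`, placed on the single edge `(0, 1)`, finitely many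
blow-ups (each inserting the sum of the two endpoint coefficients) lead to a family
for which on each edge one vector attains the minimum at both endpoints. -/
theorem stmt_9 (a₁ b₁ a₂ b₂ : ℚ)
    (ha₁ : 0 ≤ a₁) (hb₁ : 0 ≤ b₁) (ha₂ : 0 ≤ a₂) (hb₂ : 0 ≤ b₂)
    (ha : a₁ ≤ a₂) (hb : b₂ ≤ b₁) :
    ∀ s : CycleState (Fin 2),
      s.verts = {0, 1} → s.edges = {(0, 1)} →
      s.vec = ![fun x => if x = 0 then a₁ else if x = 1 then b₁ else 0,
                fun x => if x = 0 then a₂ else if x = 1 then b₂ else 0] →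
      ∃ s' : CycleState (Fin 2),
        Relation.ReflTransGen CycleState.Step s s' ∧ s'.Good := by
  intro s hverts hedges hvec
  have h00 : s.vec 0 0 = a₁ := by rw [hvec]; rfl
  have h01 : s.vec 0 1 = b₁ := by rw [hvec]; rfl
  have h10 : s.vec 1 0 = a₂ := by rw [hvec]; rfl
  have h11 : s.vec 1 1 = b₂ := by rw [hvec]; rfl
  set d : ℚ := a₂ - a₁ with hd
  set e : ℚ := b₁ - b₂ with he
  set q : ℚ := (d.den : ℚ) * (e.den : ℚ) with hqdef
  have hq : 0 < q := by
    apply mul_pos <;> exact_mod_cast Rat.den_pos _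
  have hkd : ∃ k : ℤ, d * q = k := by
    refine ⟨d.num * e.den, ?_⟩
    rw [hqdef, ← mul_assoc, Rat.mul_den_eq_num]
    push_cast; ring
  have hke : ∃ k : ℤ, e * q = k := by
    refine ⟨e.num * d.den, ?_⟩
    rw [hqdef, mul_comm (d.den : ℚ), ← mul_assoc, Rat.mul_den_eq_num]
    push_cast; ring
  set n : ℕ := ⌈(d + e) * q⌉₊ with hn
  have hmeas : (d + e) * q ≤ (n : ℚ) := Nat.le_ceil _
  have h0mem : (0 : ℕ) ∈ s.verts := by rw [hverts]; simp
  have h1mem : (1 : ℕ) ∈ s.verts := by rw [hverts]; simp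
  have hedge : ((0 : ℕ), (1 : ℕ)) ∈ s.edges := by rw [hedges]; simp
  obtain ⟨s', hrel, _, _, hedg⟩ :=
    key q hq n s 0 1 hedge h0mem h1mem
      (by rw [h00, h10]; exact ha)
      (by rw [h01, h11]; exact hb)
      (by rw [h00, h10]; exact hkd)
      (by rw [h01, h11]; exact hke)
      (by rw [h00, h10, h01, h11]; exact hmeas)
  refine ⟨s', hrel, ?_⟩
  intro p hp
  rcases hedg p hp with ⟨hpmem, hpne⟩ | hgoodp
  · rw [hedges] at hpmem
    exact absurd (Finset.mem_singleton.mp hpmem) hpne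
  · exact hgoodp
end
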